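/- Let $\bar C$ be the completion of the coefficient matrix $C$ with respect to a possible context $\{X_K=x_K\}$ with constant-node set $K^\ast$, defined by $\bar c_{ij}=x_i/x_j$ if $i,j\in K^\ast$ and $\bar c_{ij}=c_{ij}$ otherwise. Then the maximum cycle mean of $\bar C$ equals $1$. -/

import Mathlib

open scoped NNReal

noncomputable section

/-- Max-times matrix-vector product: `(A ⊙ x) i = max_j (A i j * x j)`. -/
def maxMul {d : ℕ} (A : Matrix (Fin d) (Fin d) ℝ≥0) (x : Fin d → ℝ≥0) : Fin d → ℝ≥0 :=
  fun i => Finset.univ.sup fun j => A i j * x j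

/-- Max-times matrix product. -/
def maxMatMul {d : ℕ} (A B : Matrix (Fin d) (Fin d) ℝ≥0) : Matrix (Fin d) (Fin d) ℝ≥0 :=
  Matrix.of fun i j => Finset.univ.sup fun l => A i l * B l j

/-- Max-times matrix powers, with `A^{⊙0}` the identity matrix. -/
def maxPow {d : ℕ} (A : Matrix (Fin d) (Fin d) ℝ≥0) : ℕ → Matrix (Fin d) (Fin d) ℝ≥0
  | 0 => Matrix.of fun i j => if i = j then 1 else 0
  | k + 1 => maxMatMul A (maxPow A k)

/-- Kleene star `C^* = I ∨ C ∨ C^{⊙2} ∨ ⋯ ∨ C^{⊙(d-1)}` over the max-times semiring. -/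
def kleene {d : ℕ} (C : Matrix (Fin d) (Fin d) ℝ≥0) : Matrix (Fin d) (Fin d) ℝ≥0 :=
  Matrix.of fun i j => (Finset.range d).sup fun k => maxPow C k i j

/-- The support digraph of `C` (edge `j → i` iff `C i j ≠ 0`) has no directed cycle. -/
def SupportAcyclic {d : ℕ} (C : Matrix (Fin d) (Fin d) ℝ≥0) : Prop :=
  ¬ ∃ (r : ℕ) (c : Fin (r + 1) → Fin d), Function.Injective c ∧ ∀ t, C (c (t + 1)) (c t) ≠ 0

/-- Weight of the directed cycle `c 0 → c 1 → ⋯ → c r → c 0`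
(the edge `j → i` contributes the entry `A i j`). -/
def cycleWeight {d : ℕ} (A : Matrix (Fin d) (Fin d) ℝ≥0) {r : ℕ}
    (c : Fin (r + 1) → Fin d) : ℝ≥0 :=
  ∏ t, A (c (t + 1)) (c t)

/-- Maximum cycle mean: the supremum of the geometric means of the weights of
(simple) directed cycles of the digraph of `A`; it is `0` when this digraph is acyclic. -/
noncomputable def maxCycleMean {d : ℕ} (A : Matrix (Fin d) (Fin d) ℝ≥0) : ℝ≥0 :=
  sSup {m | ∃ (r : ℕ) (c : Fin (r + 1) → Fin d),
    Function.Injective c ∧ m = cycleWeight A c ^ (((r : ℝ) + 1)⁻¹)}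

/-- The completion of `C` with respect to a context with constant-node set `Ks` and constant
values `x`: `c̄_{ij} = x i / x j` if `i, j ∈ Ks`, and `c̄_{ij} = c_{ij}` otherwise. -/
def completionMatrix {d : ℕ} (C : Matrix (Fin d) (Fin d) ℝ≥0) (Ks : Finset (Fin d))
    (x : Fin d → ℝ≥0) : Matrix (Fin d) (Fin d) ℝ≥0 :=
  Matrix.of fun i j => if i ∈ Ks ∧ j ∈ Ks then x i / x j else C i j

lemma maxPow_walk {d : ℕ} (C : Matrix (Fin d) (Fin d) ℝ≥0) :
    ∀ (k : ℕ) (i j : Fin d), maxPow C k i j ≠ 0 →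
    ∃ c : ℕ → Fin d, c 0 = j ∧ c k = i ∧ ∀ t < k, C (c (t+1)) (c t) ≠ 0 := by
  intro k
  induction k with
  | zero =>
    intro i j h
    have hij : i = j := by
      by_contra hne
      simp [maxPow, hne] at h
    exact ⟨fun _ => j, rfl, by simp [hij], by omega⟩
  | succ k ih =>
    intro i j h
    have : ∃ l ∈ Finset.univ, C i l * maxPow C k l j ≠ 0 := by
      by_contra hc; push_neg at hc
      exact h (Finset.sup_eq_bot_iff _ _ |>.mpr hc)
    obtain ⟨l, -, hl⟩ := this
    have hCl : C i l ≠ 0 := fun h0 => hl (by simp [h0])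
    have hPl : maxPow C k l j ≠ 0 := fun h0 => hl (by simp [h0])
    obtain ⟨c, hc0, hck, hce⟩ := ih l j hPl
    refine ⟨fun t => if t < k + 1 then c t else i, by simp [hc0], by simp, ?_⟩
    intro t ht
    rcases Nat.lt_or_ge t k with h1 | h1
    · have : t + 1 < k + 1 := by omega
      simpa [this, Nat.lt_of_lt_of_le h1 (Nat.le_succ k)] using hce t h1
    · have ht' : t = k := by omega
      subst ht'
      simp only [Nat.lt_irrefl, Nat.lt_succ_self, if_true]
      simpa [Nat.lt_succ_self, hck] using hCl

lemma maxPow_nilpotent {d : ℕ} (C : Matrix (Fin d) (Fin d) ℝ≥0) (hC : SupportAcyclic C)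
    (i j : Fin d) : maxPow C d i j = 0 := by
  by_contra h
  obtain ⟨c, -, -, hce⟩ := maxPow_walk C d i j h
  -- pigeonhole on c restricted to Fin (d+1)
  have hcard : Fintype.card (Fin d) < Fintype.card (Fin (d + 1)) := by simp
  obtain ⟨a, b, hab, heq⟩ := Fintype.exists_ne_map_eq_of_card_lt
    (fun t : Fin (d+1) => c t) hcard
  -- so exist a gap
  have hex : ∃ g : ℕ, 0 < g ∧ ∃ a : ℕ, a + g ≤ d ∧ c a = c (a + g) := by
    rcases Nat.lt_or_ge (a : ℕ) (b : ℕ) with h1 | h1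
    · exact ⟨b - a, by omega, a, by omega, by rw [heq]; congr 1; omega⟩
    · have h1 : (b : ℕ) < a := by
        rcases Nat.lt_or_ge (b:ℕ) (a:ℕ) with h2 | h2
        · exact h2
        · exact absurd (Fin.ext (by omega)) hab
      exact ⟨a - b, by omega, b, by omega, by rw [← heq]; congr 1; omega⟩
  classical
  set g := Nat.find hex with hgdef
  obtain ⟨hg, a, hag, hca⟩ : 0 < g ∧ ∃ a : ℕ, a + g ≤ d ∧ c a = c (a + g) := Nat.find_spec hex
  have hmin : ∀ g' < g, ¬ (0 < g' ∧ ∃ a : ℕ, a + g' ≤ d ∧ c a = c (a + g')) :=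
    fun g' hg' => Nat.find_min hex hg'
  apply hC
  refine ⟨g - 1, fun t => c (a + t), ?_, ?_⟩
  · intro s t hst
    have hst' : c (a + (s:ℕ)) = c (a + (t:ℕ)) := hst
    by_contra hne
    have hsv : (s : ℕ) < g := by have := s.isLt; omega
    have htv : (t : ℕ) < g := by have := t.isLt; omega
    rcases Nat.lt_or_ge (s:ℕ) (t:ℕ) with h1 | h1
    · exact hmin ((t:ℕ) - s) (by omega) ⟨by omega, a + s, by omega, by
        rw [hst']; congr 1; omega⟩
    · have h1 : (t:ℕ) < s := by
        rcases Nat.lt_or_ge (t:ℕ) (s:ℕ) with h2 | h2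
        · exact h2
        · exact absurd (Fin.ext (by omega)) hne
      exact hmin ((s:ℕ) - t) (by omega) ⟨by omega, a + t, by omega, by
        rw [← hst']; congr 1; omega⟩
  · intro t
    show C (c (a + ((t + 1 : Fin (g - 1 + 1)) : ℕ))) (c (a + (t : ℕ))) ≠ 0
    have htv : (t : ℕ) < g := by have := t.isLt; omega
    have h1g : ((1 : Fin (g-1+1)) : ℕ) = 1 % (g - 1 + 1) := rfl
    have htl := t.isLt
    rcases Nat.lt_or_ge ((t : ℕ) + 1) g with h1 | h1
    · have hadd : ((t + 1 : Fin (g - 1 + 1)) : ℕ) = (t : ℕ) + 1 := by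
        rw [Fin.add_def]
        have e1 : (1:ℕ) % (g-1+1) = 1 := Nat.mod_eq_of_lt (by omega)
        simp only [h1g, e1]
        exact Nat.mod_eq_of_lt (by omega)
      rw [hadd]
      have h2 : a + ((t:ℕ) + 1) = (a + t) + 1 := by omega
      rw [h2]
      exact hce (a + t) (by omega)
    · have hadd : ((t + 1 : Fin (g - 1 + 1)) : ℕ) = 0 := by
        rw [Fin.add_def]
        simp only [h1g]
        rcases Nat.lt_or_ge 1 g with h2 | h2
        · have e1 : (1:ℕ) % (g-1+1) = 1 := Nat.mod_eq_of_lt (by omega)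
          rw [e1]
          have e2 : (t:ℕ) + 1 = g - 1 + 1 := by omega
          rw [e2]
          exact Nat.mod_self _
        · have hg1 : g = 1 := by omega
          have e2 : ∀ m : ℕ, m % (g - 1 + 1) = 0 := by
            intro m
            have e3 : g - 1 + 1 = 1 := by omega
            simp [e3, Nat.mod_one]
          exact e2 _
      rw [hadd]
      have h2 : c (a + (0:ℕ)) = c ((a + (t:ℕ)) + 1) := by
        have : a + (0:ℕ) = a := by omega
        rw [this, hca]; congr 1; omega
      rw [h2]
      exact hce (a + t) (by omega)

lemma one_le_kleene_diag {d : ℕ} (C : Matrix (Fin d) (Fin d) ℝ≥0) (i : Fin d) :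
    1 ≤ kleene C i i := by
  have h0 : (0:ℕ) ∈ Finset.range d := Finset.mem_range.mpr i.pos
  have h1 : (1:ℝ≥0) = maxPow C 0 i i := by simp [maxPow]
  rw [h1]
  exact Finset.le_sup (f := fun k => maxPow C k i i) h0

lemma kleene_absorb {d : ℕ} (C : Matrix (Fin d) (Fin d) ℝ≥0) (hC : SupportAcyclic C)
    (i j l : Fin d) : C i j * kleene C j l ≤ kleene C i l := by
  show C i j * (Finset.range d).sup (fun k => maxPow C k j l) ≤ _
  rw [NNReal.mul_finset_sup]
  apply Finset.sup_le
  intro k hk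
  rw [Finset.mem_range] at hk
  have h1 : C i j * maxPow C k j l ≤ maxPow C (k+1) i l :=
    Finset.le_sup (f := fun m => C i m * maxPow C k m l) (Finset.mem_univ j)
  rcases Nat.lt_or_ge (k+1) d with h2 | h2
  · exact h1.trans (Finset.le_sup (f := fun k => maxPow C k i l) (Finset.mem_range.mpr h2))
  · have h3 : k + 1 = d := by omega
    rw [h3, maxPow_nilpotent C hC] at h1
    exact h1.trans zero_le

/-- The completion `C̄` of a DAG-supported coefficient matrix `C` with respect to a possible
context (constant nodes `Ks` with positive feasible values `x`) has maximum cycle mean `1`. -/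
theorem stmt15 {d : ℕ} (C : Matrix (Fin d) (Fin d) ℝ≥0) (hC : SupportAcyclic C)
    (Ks : Finset (Fin d)) (x : Fin d → ℝ≥0) (hKs : Ks.Nonempty)
    (hx : ∀ k ∈ Ks, 0 < x k)
    (hfeas : ∀ r ∈ Ks, ∀ l ∈ Ks, kleene C r l * x l ≤ x r) :
    maxCycleMean (completionMatrix C Ks x) = 1 := by
  classical
  set A := completionMatrix C Ks x with hAdef
  set y : Fin d → ℝ≥0 := fun i => Ks.sup fun l => kleene C i l * x l with hydef
  have hyK : ∀ i ∈ Ks, y i = x i := by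
    intro i hi
    apply le_antisymm
    · exact Finset.sup_le fun l hl => hfeas i hi l hl
    · calc x i = 1 * x i := (one_mul _).symm
        _ ≤ kleene C i i * x i := mul_le_mul_left (one_le_kleene_diag C i) _
        _ ≤ y i := Finset.le_sup (f := fun l => kleene C i l * x l) hi
  have hstep : ∀ i j, A i j * y j ≤ y i := by
    intro i j
    by_cases hij : i ∈ Ks ∧ j ∈ Ks
    · have hA : A i j = x i / x j := by simp [hAdef, completionMatrix, hij]
      rw [hA, hyK j hij.2, div_mul_cancel₀ _ (hx j hij.2).ne', hyK i hij.1]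
    · have hA : A i j = C i j := by simp [hAdef, completionMatrix, hij]
      rw [hA]
      show C i j * Ks.sup (fun l => kleene C j l * x l) ≤ y i
      rw [NNReal.mul_finset_sup]
      apply Finset.sup_le
      intro l hl
      calc C i j * (kleene C j l * x l) = (C i j * kleene C j l) * x l := (mul_assoc _ _ _).symm
        _ ≤ kleene C i l * x l := mul_le_mul_left (kleene_absorb C hC i j l) _
        _ ≤ y i := Finset.le_sup (f := fun l => kleene C i l * x l) hl
  have hW : ∀ (r : ℕ) (c : Fin (r+1) → Fin d), Function.Injective c →
      cycleWeight A c ≤ 1 := by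
    intro r c hinj
    by_cases h0 : ∃ t, A (c (t+1)) (c t) = 0
    · obtain ⟨t, ht⟩ := h0
      have : cycleWeight A c = 0 := Finset.prod_eq_zero (Finset.mem_univ t) ht
      rw [this]; exact zero_le
    push_neg at h0
    by_cases hcomp : ∃ t : Fin (r+1), c t ∈ Ks ∧ c (t+1) ∈ Ks
    · obtain ⟨t0, ht0, ht1⟩ := hcomp
      open Fin.NatCast in
      have hpos : ∀ n : ℕ, 0 < y (c (t0 + 1 + (n : Fin (r+1)))) := by
        intro n
        induction n with
        | zero =>
          have h00 : ((0:ℕ) : Fin (r+1)) = 0 := by simp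
          rw [h00, add_zero, hyK _ ht1]
          exact hx _ ht1
        | succ n ihn =>
          have hcast : ((n+1 : ℕ) : Fin (r+1)) = (n : Fin (r+1)) + 1 := by push_cast; ring
          rw [hcast, ← add_assoc]
          have hAne := h0 (t0 + 1 + (n:Fin (r+1)))
          calc (0:ℝ≥0) < A (c (t0 + 1 + (n:Fin (r+1)) + 1)) (c (t0 + 1 + (n:Fin (r+1)))) *
              y (c (t0 + 1 + (n:Fin (r+1)))) :=
            mul_pos (pos_iff_ne_zero.mpr hAne) ihn
          _ ≤ y (c (t0 + 1 + (n:Fin (r+1)) + 1)) := hstep _ _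
      have hally : ∀ t, 0 < y (c t) := by
        intro t
        open Fin.NatCast in
        have heq : t0 + 1 + (((t - (t0+1)).val : ℕ) : Fin (r+1)) = t := by
          rw [Fin.cast_val_eq_self]
          rw [add_comm (t0+1), sub_add_cancel]
        have := hpos ((t - (t0+1)).val)
        rwa [heq] at this
      have hP : 0 < ∏ t, y (c t) := Finset.prod_pos fun t _ => hally t
      have hWP : cycleWeight A c * ∏ t, y (c t) ≤ 1 * ∏ t, y (c t) := by
        rw [one_mul]
        calc cycleWeight A c * ∏ t, y (c t)
            = ∏ t, (A (c (t+1)) (c t) * y (c t)) := by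
              rw [cycleWeight, ← Finset.prod_mul_distrib]
          _ ≤ ∏ t, y (c (t+1)) := Finset.prod_le_prod' fun t _ => hstep _ _
          _ = ∏ t, y (c t) := Equiv.prod_comp (Equiv.addRight (1 : Fin (r+1))) (fun t => y (c t))
      exact le_of_mul_le_mul_right hWP hP
    · exfalso
      apply hC
      refine ⟨r, c, hinj, fun t => ?_⟩
      have hnc : ¬ (c (t+1) ∈ Ks ∧ c t ∈ Ks) := fun h => hcomp ⟨t, h.2, h.1⟩
      have : A (c (t+1)) (c t) = C (c (t+1)) (c t) := by
        simp [hAdef, completionMatrix, hnc]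
      rw [← this]
      exact h0 t
  obtain ⟨k, hk⟩ := hKs
  have mem1 : (1:ℝ≥0) ∈ {m | ∃ (r : ℕ) (c : Fin (r + 1) → Fin d),
      Function.Injective c ∧ m = cycleWeight A c ^ (((r : ℝ) + 1)⁻¹)} := by
    refine ⟨0, fun _ => k, fun a b _ => by have := a.isLt; have := b.isLt; exact Fin.ext (by omega), ?_⟩
    have hw : cycleWeight A (fun _ : Fin 1 => k) = 1 := by
      simp [cycleWeight, hAdef, completionMatrix, hk, div_self (hx k hk).ne']
    rw [hw, NNReal.one_rpow]
  have bound : ∀ m ∈ {m | ∃ (r : ℕ) (c : Fin (r + 1) → Fin d),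
      Function.Injective c ∧ m = cycleWeight A c ^ (((r : ℝ) + 1)⁻¹)}, m ≤ 1 := by
    rintro m ⟨r, c, hinj, rfl⟩
    exact NNReal.rpow_le_one (hW r c hinj) (by positivity)
  rw [maxCycleMean]
  exact le_antisymm (csSup_le ⟨1, mem1⟩ bound) (le_csSup ⟨1, fun m hm => bound m hm⟩ mem1)


end
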